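/- Let k ≥ 2 and let α, β in F_{q^m} both generate F_{q^m} over F_q. Then the codes with generator matrices G = (I_k | αI_k | ... | α^{m-1}I_k) and G' = (I_k | βI_k | ... | β^{m-1}I_k) are linearly equivalent; i.e., there exists A in GL_{mk}(F_q) with GA = G'. Consequently there is exactly one linear equivalence class of one-weight [mk, k, m] rank-metric codes over F_{q^m}. -/

import Mathlib

open Module

set_option linter.unusedSectionVars false
set_option maxHeartbeats 1000000

section OneWeightAux

variable {Fq Fqm : Type*} [Field Fq] [Field Fqm] [Fintype Fq] [Fintype Fqm] [Algebra Fq Fqm]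
variable {m k : ℕ}

/-- If `α` generates `F_{q^m}` over `F_q`, the powers `1, α, …, α^{m-1}` form a basis. -/
lemma oneWeight_exists_pow_basis (hrank : finrank Fq Fqm = m) (α : Fqm)
    (hα : Algebra.adjoin Fq ({α} : Set Fqm) = ⊤) :
    ∃ b : Basis (Fin m) Fq Fqm, ∀ j : Fin m, b j = α ^ (j : ℕ) := by
  have hint : IsIntegral Fq α := IsIntegral.of_finite Fq α
  let e : (Algebra.adjoin Fq ({α} : Set Fqm)) ≃ₐ[Fq] Fqm :=
    (Subalgebra.equivOfEq _ _ hα).trans Subalgebra.topEquiv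
  let pb := (Algebra.adjoin.powerBasis hint).map e
  have hgen : pb.gen = α := by
    simp [pb, e, Algebra.adjoin.powerBasis]
  have hdim : pb.dim = m := by rw [← pb.finrank, hrank]
  refine ⟨pb.basis.reindex (finCongr hdim), fun j => ?_⟩
  rw [Basis.reindex_apply, pb.basis_eq_pow, hgen]
  congr 1

/-- The columns of a generator matrix of a one-weight code form an `F_q`-basis of
`F_{q^m}^k`. -/
lemma oneWeight_cols_basis (hm : 1 ≤ m) (hrank : finrank Fq Fqm = m)
    (C : Submodule Fqm ((Fin m × Fin k) → Fqm))
    (b : Basis (Fin k) Fqm C)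
    (hw : ∀ v ∈ C, v ≠ 0 → finrank Fq (Submodule.span Fq (Set.range v)) = m) :
    ∃ bc : Basis (Fin m × Fin k) Fq (Fin k → Fqm),
      ∀ jc i, bc jc i = (b i : (Fin m × Fin k) → Fqm) jc := by
  classical
  set c : (Fin m × Fin k) → (Fin k → Fqm) := fun jc i => (b i : (Fin m × Fin k) → Fqm) jc with hc
  -- a fixed nonzero functional ψ : Fqm →ₗ[Fq] Fq
  obtain ⟨bb, -⟩ : ∃ bb : Basis (Fin m) Fq Fqm, True :=
    ⟨finBasisOfFinrankEq Fq Fqm hrank, trivial⟩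
  set ψ : Fqm →ₗ[Fq] Fq := bb.coord ⟨0, hm⟩ with hψdef
  have hψ : ψ ≠ 0 := by
    intro h
    have : ψ (bb ⟨0, hm⟩) = 1 := by simp [hψdef]
    rw [h] at this
    simp at this
  -- the bilinear pairing `Θ x c = ψ (∑ i, x i * c i)`
  set Θ : (Fin k → Fqm) →ₗ[Fq] Module.Dual Fq (Fin k → Fqm) :=
    LinearMap.mk₂ Fq (fun x c => ψ (∑ i, x i * c i))
      (fun x y c => by simp [add_mul, Finset.sum_add_distrib])
      (fun a x c => by simp [smul_mul_assoc, ← Finset.smul_sum])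
      (fun x y z => by simp [mul_add, Finset.sum_add_distrib])
      (fun a x c => by simp [mul_smul_comm, ← Finset.smul_sum]) with hΘdef
  have hΘapp : ∀ x cc, Θ x cc = ψ (∑ i, x i * cc i) := fun x cc => rfl
  have hinj : Function.Injective Θ := by
    rw [← LinearMap.ker_eq_bot]
    rw [Submodule.eq_bot_iff]
    intro x hx
    rw [LinearMap.mem_ker] at hx
    funext i
    by_contra hxi
    have h0 : ∀ y : Fqm, ψ (x i * y) = 0 := by
      intro y
      have h1 : Θ x (Pi.single i y) = 0 := by rw [hx]; rfl
      rw [hΘapp] at h1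
      rwa [Finset.sum_eq_single i (fun l _ hl => by simp [Pi.single_apply, hl])
        (by simp), Pi.single_eq_same] at h1
    apply hψ
    ext z
    have := h0 ((x i)⁻¹ * z)
    rwa [mul_inv_cancel_left₀ hxi] at this
  have hsurj : Function.Surjective Θ :=
    (LinearMap.injective_iff_surjective_of_finrank_eq_finrank
      (Subspace.dual_finrank_eq).symm).mp hinj
  -- the columns span `F_{q^m}^k` over `F_q`
  have hspan : ⊤ ≤ Submodule.span Fq (Set.range c) := by
    by_contra hlt
    have hlt' : Submodule.span Fq (Set.range c) < ⊤ :=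
      lt_of_le_of_ne le_top (fun h => hlt (h ▸ le_rfl))
    obtain ⟨φ, φne, hφ⟩ :=
      Submodule.exists_dual_map_eq_bot_of_lt_top hlt' inferInstance
    obtain ⟨x, hx⟩ := hsurj φ
    have hxne : x ≠ 0 := by
      intro h; apply φne; rw [← hx, h, map_zero]
    set v : (Fin m × Fin k) → Fqm := ∑ i, x i • ((b i : (Fin m × Fin k) → Fqm)) with hv
    have hvC : v ∈ C := Submodule.sum_mem _ fun i _ => Submodule.smul_mem _ _ (b i).2
    have hvne : v ≠ 0 := by
      intro h
      apply hxne
      have hsum : (∑ i, x i • b i : C) = 0 := by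
        apply Subtype.ext
        push_cast
        exact h
      have := Fintype.linearIndependent_iff.mp b.linearIndependent x hsum
      funext i; exact this i
    have hval : ∀ jc, v jc = ∑ i, x i * c jc i := by
      intro jc
      rw [hv]
      simp [Finset.sum_apply, hc]
    have hker : ∀ jc, ψ (v jc) = 0 := by
      intro jc
      rw [hval, ← hΘapp, hx]
      have hmem : c jc ∈ Submodule.span Fq (Set.range c) :=
        Submodule.subset_span ⟨jc, rfl⟩
      have : φ (c jc) ∈ (⊥ : Submodule Fq Fq) := hφ ▸ Submodule.mem_map_of_mem hmem
      exact (Submodule.mem_bot Fq).mp this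
    have htop : Submodule.span Fq (Set.range v) = ⊤ := by
      apply Submodule.eq_top_of_finrank_eq
      rw [hw v hvC hvne, hrank]
    have hle : Submodule.span Fq (Set.range v) ≤ LinearMap.ker ψ := by
      rw [Submodule.span_le]
      rintro _ ⟨jc, rfl⟩
      exact hker jc
    rw [htop, top_le_iff, LinearMap.ker_eq_top] at hle
    exact hψ hle
  have hcard : Fintype.card (Fin m × Fin k) = finrank Fq (Fin k → Fqm) := by
    rw [Module.finrank_pi_fintype]
    simp [hrank, mul_comm]
  refine ⟨basisOfTopLeSpanOfCardEqFinrank c hspan hcard, fun jc i => ?_⟩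
  rw [coe_basisOfTopLeSpanOfCardEqFinrank]

lemma oneWeight_span_coe_basis (C : Submodule Fqm ((Fin m × Fin k) → Fqm))
    (b : Basis (Fin k) Fqm C) :
    Submodule.span Fqm (Set.range fun i => ((b i : (Fin m × Fin k) → Fqm))) = C := by
  calc Submodule.span Fqm (Set.range fun i => ((b i : (Fin m × Fin k) → Fqm)))
      = Submodule.map C.subtype (Submodule.span Fqm (Set.range ⇑b)) := by
        rw [Submodule.map_span, ← Set.range_comp]
        rfl
    _ = Submodule.map C.subtype ⊤ := by rw [b.span_eq]
    _ = C := Submodule.map_subtype_top C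

/-- Two codes whose generator matrices have columns forming `F_q`-bases of `F_{q^m}^k`
are linearly equivalent. -/
lemma oneWeight_code_map (C₁ C₂ : Submodule Fqm ((Fin m × Fin k) → Fqm))
    (b₁ : Basis (Fin k) Fqm C₁) (b₂ : Basis (Fin k) Fqm C₂)
    (bc₁ bc₂ : Basis (Fin m × Fin k) Fq (Fin k → Fqm))
    (h₁ : ∀ jc i, bc₁ jc i = (b₁ i : (Fin m × Fin k) → Fqm) jc)
    (h₂ : ∀ jc i, bc₂ jc i = (b₂ i : (Fin m × Fin k) → Fqm) jc) :
    ∃ A : Matrix (Fin m × Fin k) (Fin m × Fin k) Fq, IsUnit A ∧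
      (C₁ : Set ((Fin m × Fin k) → Fqm)) =
        (fun v => Matrix.vecMul v (A.map (algebraMap Fq Fqm))) '' (C₂ : Set _) := by
  classical
  set A := bc₂.toMatrix ⇑bc₁ with hA
  have hunit : IsUnit A :=
    ⟨⟨A, bc₁.toMatrix ⇑bc₂, Basis.toMatrix_mul_toMatrix_flip _ _,
      Basis.toMatrix_mul_toMatrix_flip _ _⟩, rfl⟩
  set M := A.map (algebraMap Fq Fqm) with hM
  set T := M.vecMulLinear with hT
  have hTb : ∀ i, T ((b₂ i : (Fin m × Fin k) → Fqm)) = (b₁ i : (Fin m × Fin k) → Fqm) := by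
    intro i
    funext jc
    have key : ∑ l, A l jc • bc₂ l = bc₁ jc := bc₂.sum_toMatrix_smul_self ⇑bc₁ jc
    have key' : (∑ l, A l jc • bc₂ l) i = bc₁ jc i := by rw [key]
    rw [Finset.sum_apply] at key'
    rw [hT, Matrix.vecMulLinear_apply]
    rw [Matrix.vecMul, ← h₁ jc i]
    rw [← key']
    simp only [dotProduct, Pi.smul_apply, Algebra.smul_def, hM, Matrix.map_apply]
    exact Finset.sum_congr rfl fun l _ => by rw [h₂, mul_comm]
  have hmap : Submodule.map T C₂ = C₁ := by
    rw [← oneWeight_span_coe_basis C₂ b₂, Submodule.map_span, ← Set.range_comp]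
    have : (⇑T ∘ fun i => ((b₂ i : (Fin m × Fin k) → Fqm)))
        = fun i => ((b₁ i : (Fin m × Fin k) → Fqm)) := funext fun i => hTb i
    rw [this, oneWeight_span_coe_basis C₁ b₁]
  refine ⟨A, hunit, ?_⟩
  rw [← hmap]
  rw [Submodule.map_coe]
  rfl

end OneWeightAux

/-- The generator matrix `(I_k | αI_k | … | α^{m-1}I_k)`, with the `mk` columns indexed by
`Fin m × Fin k` (block `j`, column `i'`). -/
def oneWeightGen (Fq Fqm : Type*) [Field Fq] [Field Fqm] [Algebra Fq Fqm]
    (m k : ℕ) (α : Fqm) : Matrix (Fin k) (Fin m × Fin k) Fqm :=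
  fun i jc => α ^ (jc.1 : ℕ) * (if i = jc.2 then 1 else 0)

section OneWeightAux2

variable {Fq Fqm : Type*} [Field Fq] [Field Fqm] [Fintype Fq] [Fintype Fqm] [Algebra Fq Fqm]
variable {m k : ℕ}

lemma oneWeightGen_cols_basis (α : Fqm)
    (hb : ∃ bm : Basis (Fin m) Fq Fqm, ∀ j : Fin m, bm j = α ^ (j : ℕ)) :
    ∃ bc : Basis (Fin m × Fin k) Fq (Fin k → Fqm),
      ∀ jc i, bc jc i = oneWeightGen Fq Fqm m k α i jc := by
  classical
  obtain ⟨bm, hbm⟩ := hb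
  refine ⟨bm.smulTower (Pi.basisFun Fqm (Fin k)), fun jc i => ?_⟩
  rw [Basis.smulTower_apply, hbm]
  simp [oneWeightGen, Pi.single_apply, Algebra.smul_def, eq_comm]

lemma oneWeightGen_equiv (α β : Fqm)
    (hα : ∃ bm : Basis (Fin m) Fq Fqm, ∀ j : Fin m, bm j = α ^ (j : ℕ))
    (hβ : ∃ bm : Basis (Fin m) Fq Fqm, ∀ j : Fin m, bm j = β ^ (j : ℕ)) :
    ∃ A : Matrix (Fin m × Fin k) (Fin m × Fin k) Fq, IsUnit A ∧
      oneWeightGen Fq Fqm m k α * A.map (algebraMap Fq Fqm) = oneWeightGen Fq Fqm m k β := by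
  classical
  obtain ⟨bα, hbα⟩ := oneWeightGen_cols_basis (k := k) α hα
  obtain ⟨bβ, hbβ⟩ := oneWeightGen_cols_basis (k := k) β hβ
  set A := bα.toMatrix ⇑bβ with hA
  have hunit : IsUnit A :=
    ⟨⟨A, bβ.toMatrix ⇑bα, Basis.toMatrix_mul_toMatrix_flip _ _,
      Basis.toMatrix_mul_toMatrix_flip _ _⟩, rfl⟩
  refine ⟨A, hunit, ?_⟩
  ext i jc
  have key : ∑ l, A l jc • bα l = bβ jc := bα.sum_toMatrix_smul_self ⇑bβ jc
  have key' : (∑ l, A l jc • bα l) i = bβ jc i := by rw [key]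
  rw [Finset.sum_apply] at key'
  rw [Matrix.mul_apply, ← hbβ jc i, ← key']
  refine Finset.sum_congr rfl fun l _ => ?_
  rw [Pi.smul_apply, hbα l i, Algebra.smul_def, Matrix.map_apply, mul_comm]

end OneWeightAux2

/-- Let `k ≥ 2` and let `α, β ∈ F_{q^m}` both generate `F_{q^m}` over
`F_q`. Then the generator matrices `G = (I_k|αI_k|…|α^{m-1}I_k)` and
`G' = (I_k|βI_k|…|β^{m-1}I_k)` satisfy `GA = G'` for some `A ∈ GL_{mk}(F_q)`.
Consequently, any two one-weight `[mk, k, m]` rank-metric codes over `F_{q^m}`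
(`k`-dimensional subspaces of `F_{q^m}^{mk}` all of whose nonzero codewords have rank
weight exactly `m`) are linearly equivalent: there is exactly one equivalence class. -/
theorem oneWeight_codes_single_class
    (Fq Fqm : Type*) [Field Fq] [Field Fqm] [Fintype Fq] [Fintype Fqm] [Algebra Fq Fqm]
    (m k : ℕ) (hm : 1 ≤ m) (hk : 2 ≤ k) (hrank : finrank Fq Fqm = m)
    (α β : Fqm) (hα : Algebra.adjoin Fq ({α} : Set Fqm) = ⊤)
    (hβ : Algebra.adjoin Fq ({β} : Set Fqm) = ⊤) :
    (∃ A : Matrix (Fin m × Fin k) (Fin m × Fin k) Fq, IsUnit A ∧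
        oneWeightGen Fq Fqm m k α * A.map (algebraMap Fq Fqm) = oneWeightGen Fq Fqm m k β)
    ∧
    (∀ C₁ C₂ : Submodule Fqm ((Fin m × Fin k) → Fqm),
      finrank Fqm C₁ = k → finrank Fqm C₂ = k →
      (∀ v ∈ C₁, v ≠ 0 → finrank Fq (Submodule.span Fq (Set.range v)) = m) →
      (∀ v ∈ C₂, v ≠ 0 → finrank Fq (Submodule.span Fq (Set.range v)) = m) →
      ∃ A : Matrix (Fin m × Fin k) (Fin m × Fin k) Fq, IsUnit A ∧
        (C₁ : Set ((Fin m × Fin k) → Fqm)) =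
          (fun v => Matrix.vecMul v (A.map (algebraMap Fq Fqm))) '' (C₂ : Set _)) := by
  constructor
  · exact oneWeightGen_equiv α β (oneWeight_exists_pow_basis hrank α hα)
      (oneWeight_exists_pow_basis hrank β hβ)
  · intro C₁ C₂ h₁ h₂ hw₁ hw₂
    let b₁ : Basis (Fin k) Fqm C₁ := finBasisOfFinrankEq Fqm C₁ h₁
    let b₂ : Basis (Fin k) Fqm C₂ := finBasisOfFinrankEq Fqm C₂ h₂
    obtain ⟨bc₁, hbc₁⟩ := oneWeight_cols_basis hm hrank C₁ b₁ hw₁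
    obtain ⟨bc₂, hbc₂⟩ := oneWeight_cols_basis hm hrank C₂ b₂ hw₂
    exact oneWeight_code_map C₁ C₂ b₁ b₂ bc₁ bc₂ hbc₁ hbc₂
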